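/- Let α, ω : ℝ → ℝ, f > 0 and ρ₀ > 0. There exist Ω ∈ ℝ and ψ₀ ∈ ℝ such that (ρ₀, ψ₀) is an equilibrium of the co-rotating forced normal form if and only if |α(ρ₀)|·ρ₀ ≤ f. In other words, the set of amplitudes attainable as forced periodic responses for forcing amplitude f, over all forcing frequencies Ω, is exactly { ρ₀ > 0 : |α(ρ₀)|·ρ₀ ≤ f }. -/

import Mathlib

/-- For a fixed forcing amplitude `f > 0`, an amplitude `ρ₀ > 0`
is attainable as a forced periodic response for some forcing frequency `Ω`
iff `|α(ρ₀)| ρ₀ ≤ f`. -/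
theorem corotating_equilibrium_attainable_amplitudes
    (α ω : ℝ → ℝ) (f : ℝ) (hf : f > 0)
    (ρ₀ : ℝ) (hρ₀ : ρ₀ > 0) :
    (∃ (Ω : ℝ) (ψ₀ : ℝ), -α ρ₀ * ρ₀ + f * Real.sin ψ₀ = 0 ∧
        ω ρ₀ - Ω + (f / ρ₀) * Real.cos ψ₀ = 0) ↔
      |α ρ₀| * ρ₀ ≤ f := by
  constructor
  · rintro ⟨Ω, ψ₀, h1, _⟩
    have h : α ρ₀ * ρ₀ = f * Real.sin ψ₀ := by linarith
    have : |α ρ₀ * ρ₀| = |f * Real.sin ψ₀| := by rw [h]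
    rw [abs_mul, abs_of_pos hρ₀] at this
    rw [this, abs_mul, abs_of_pos hf]
    calc f * |Real.sin ψ₀| ≤ f * 1 := by
          exact mul_le_mul_of_nonneg_left (Real.abs_sin_le_one ψ₀) hf.le
      _ = f := mul_one f
  · intro h
    set x := α ρ₀ * ρ₀ / f with hx
    have hx1 : |x| ≤ 1 := by
      rw [hx, abs_div, abs_of_pos hf, div_le_one hf, abs_mul, abs_of_pos hρ₀]
      exact h
    have hx1' : -1 ≤ x := by cases abs_le.mp hx1; linarith
    have hx2 : x ≤ 1 := (abs_le.mp hx1).2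
    refine ⟨ω ρ₀ + (f / ρ₀) * Real.cos (Real.arcsin x), Real.arcsin x, ?_, by ring⟩
    rw [Real.sin_arcsin hx1' hx2, hx]
    field_simp
    ring
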